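/- Let D be a division ring, A : Matrix m n D with m, n finite, and b : n → D. The system of left linear equations vecMul x A = b (i.e. ∑ i, x i * A i j = b j for all j) has a solution x : m → D if and only if the left D-submodule of n → D spanned by the rows of A equals the left D-submodule spanned by the rows of A together with b; equivalently, if and only if finrank D (span D (Set.range (fun i => A i))) = finrank D (span D (Set.range (fun i => A i) ∪ {b})). -/

import Mathlib

open Matrix Submodule

theorem stmt_6 {D : Type*} [DivisionRing D] {m n : Type*} [Fintype m] [Fintype n]
    (A : Matrix m n D) (b : n → D) :
    ((∃ x : m → D, Matrix.vecMul x A = b) ↔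
      span D (Set.range fun i : m => A i) =
        span D (Set.range (fun i : m => A i) ∪ {b})) ∧
    ((∃ x : m → D, Matrix.vecMul x A = b) ↔
      Module.finrank D (span D (Set.range fun i : m => A i)) =
        Module.finrank D (span D (Set.range (fun i : m => A i) ∪ {b}))) := by
  have hsol : (∃ x : m → D, Matrix.vecMul x A = b) ↔
      b ∈ span D (Set.range fun i : m => A i) := by
    rw [mem_span_range_iff_exists_fun]
    constructor
    · rintro ⟨x, hx⟩
      exact ⟨x, by ext j; simpa [Matrix.vecMul, dotProduct] using congrFun hx j⟩
    · rintro ⟨c, hc⟩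
      exact ⟨c, by ext j; simpa [Matrix.vecMul, dotProduct] using congrFun hc j⟩
  have hle : span D (Set.range fun i : m => A i) ≤
      span D (Set.range (fun i : m => A i) ∪ {b}) :=
    span_mono Set.subset_union_left
  have hmem : b ∈ span D (Set.range (fun i : m => A i) ∪ {b}) :=
    subset_span (Set.mem_union_right _ rfl)
  have heq : b ∈ span D (Set.range fun i : m => A i) ↔
      span D (Set.range fun i : m => A i) =
        span D (Set.range (fun i : m => A i) ∪ {b}) := by
    constructor
    · intro hb
      refine le_antisymm hle ?_
      rw [span_le, Set.union_subset_iff]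
      exact ⟨subset_span, by simpa using hb⟩
    · intro h
      rw [h]; exact hmem
  have hfin : Module.Finite D (span D (Set.range (fun i : m => A i) ∪ {b})) := by
    apply Module.Finite.span_of_finite
    exact (Set.finite_range _).union (Set.finite_singleton b)
  refine ⟨hsol.trans heq, hsol.trans (heq.trans ?_)⟩
  constructor
  · intro h; rw [h]
  · intro h
    exact Submodule.eq_of_le_of_finrank_le hle (le_of_eq h.symm)
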